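/- In the setting of the previous statement (one-dimensional transports to a fixed C¹ reference density η ≥ c with η ∈ C¹), additionally assume (F^η)⁻¹ ∈ C². Then the derivatives satisfy the pointwise bound |S'(x) − S̄'(x)| ≤ C (|F^p(x) − F^{p̄}(x)| + |p(x) − p̄(x)|), and consequently ‖S' − S̄'‖_{L²([0,1])} ≤ C' ‖p − p̄‖_{L²([0,1])}. -/

import Mathlib

open MeasureTheory Set

-- Facts about a Lipschitz density bounded below with unit integral on [0,1]
lemma aux_density (m : ℝ) (M : NNReal) (p : ℝ → ℝ)
    (hp : LipschitzOnWith M p (Icc 0 1)) (hm : 0 < m)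
    (hpm : ∀ x ∈ Icc (0:ℝ) 1, m ≤ p x) (hpi : (∫ y in (0:ℝ)..1, p y) = 1) :
    (∀ x ∈ Icc (0:ℝ) 1, p x ≤ 1 + M) ∧
    (∀ x ∈ Icc (0:ℝ) 1, (∫ y in (0:ℝ)..x, p y) ∈ Icc (0:ℝ) 1) ∧
    ContinuousOn (fun x => ∫ y in (0:ℝ)..x, p y) (Icc 0 1) := by
  have hc : ContinuousOn p (Icc 0 1) := hp.continuousOn
  have hint : ∀ a b : ℝ, a ∈ Icc (0:ℝ) 1 → b ∈ Icc (0:ℝ) 1 →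
      IntervalIntegrable p volume a b := by
    intro a b ha hb
    apply ContinuousOn.intervalIntegrable
    apply hc.mono
    exact uIcc_subset_Icc ha hb
  constructor
  · intro x hx
    have hmono : ∀ y ∈ Icc (0:ℝ) 1, p x - M ≤ p y := by
      intro y hy
      have h1 : |p x - p y| ≤ M * |x - y| := by
        have := hp.dist_le_mul x hx y hy
        simpa [Real.dist_eq] using this
      have h2 : |x - y| ≤ 1 := by
        rw [abs_le]; constructor <;> [nlinarith [hx.1, hx.2, hy.1, hy.2]; nlinarith [hx.1, hx.2, hy.1, hy.2]]
      have := abs_le.1 h1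
      nlinarith [M.coe_nonneg]
    have h3 : (∫ y in (0:ℝ)..1, (p x - M : ℝ)) ≤ ∫ y in (0:ℝ)..1, p y := by
      apply intervalIntegral.integral_mono_on zero_le_one
        intervalIntegrable_const (hint 0 1 (by norm_num) (by norm_num))
      exact hmono
    rw [intervalIntegral.integral_const, hpi] at h3
    simp at h3
    linarith
  constructor
  · intro x hx
    have h0 : (0:ℝ) ≤ ∫ y in (0:ℝ)..x, p y := by
      apply intervalIntegral.integral_nonneg hx.1
      intro u hu
      exact le_trans hm.le (hpm u ⟨hu.1, le_trans hu.2 hx.2⟩)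
    have h1 : (∫ y in (0:ℝ)..x, p y) ≤ ∫ y in (0:ℝ)..1, p y := by
      apply intervalIntegral.integral_mono_interval le_rfl hx.1 hx.2
      · filter_upwards [ae_restrict_mem measurableSet_Ioc] with u hu
        exact le_trans hm.le (hpm u ⟨hu.1.le, hu.2⟩)
      · exact hint 0 1 (by norm_num) (by norm_num)
    rw [hpi] at h1
    exact ⟨h0, h1⟩
  · have := intervalIntegral.continuousOn_primitive_interval
      (a := (0:ℝ)) (b := (1:ℝ)) (μ := volume) (f := p) ?_
    · simpa [uIcc_of_le (zero_le_one' ℝ)] using this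
    · rw [uIcc_of_le (zero_le_one' ℝ)]
      exact hc.integrableOn_Icc

-- Cauchy-Schwarz on [0,1]: (∫ |g|)^2 ≤ ∫ g^2
lemma aux_cs (g : ℝ → ℝ) (hg : ContinuousOn g (Icc 0 1)) :
    (∫ x in Icc (0:ℝ) 1, |g x|) ^ 2 ≤ ∫ x in Icc (0:ℝ) 1, g x ^ 2 := by
  set A := ∫ x in Icc (0:ℝ) 1, |g x| with hA
  have h1 : IntegrableOn (fun x => |g x|) (Icc (0:ℝ) 1) := hg.abs.integrableOn_Icc
  have h2 : IntegrableOn (fun x => g x ^ 2) (Icc (0:ℝ) 1) := (hg.pow 2).integrableOn_Icc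
  have hvol : (volume (Icc (0:ℝ) 1)).toReal = 1 := by
    simp [Real.volume_Icc]
  have key : (0:ℝ) ≤ ∫ x in Icc (0:ℝ) 1, (|g x| - A) ^ 2 :=
    integral_nonneg fun x => sq_nonneg _
  have expand : (∫ x in Icc (0:ℝ) 1, (|g x| - A) ^ 2)
      = (∫ x in Icc (0:ℝ) 1, g x ^ 2) - 2 * A * A + A ^ 2 := by
    have : ∀ x : ℝ, (|g x| - A) ^ 2 = g x ^ 2 - 2 * A * |g x| + A ^ 2 := by
      intro x; rw [sub_sq, sq_abs]; ring
    simp_rw [this]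
    have hmul : IntegrableOn (fun x => 2 * A * |g x|) (Icc (0:ℝ) 1) := h1.const_mul (2*A)
    have hsub : IntegrableOn (fun x => g x ^ 2 - 2 * A * |g x|) (Icc (0:ℝ) 1) := h2.sub hmul
    have hcst : IntegrableOn (fun _ : ℝ => A ^ 2) (Icc (0:ℝ) 1) :=
      integrableOn_const (by simp [Real.volume_Icc])
    rw [integral_add hsub hcst, integral_sub h2 hmul, MeasureTheory.integral_const_mul, setIntegral_const, measureReal_def, hvol]
    simp [hA]
  nlinarith [key, expand]

section
variable (G : ℝ → ℝ)

-- properties of K = derivWithin G (Icc 0 1)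
lemma aux_K (Bg : ℝ) (hBg : 0 < Bg) (hGsm : ContDiffOn ℝ 2 G (Icc 0 1))
    (hGbd : ∀ i ≤ 2, ∀ y ∈ Icc (0:ℝ) 1, ‖iteratedDerivWithin i G (Icc 0 1) y‖ ≤ Bg) :
    (∀ y ∈ Icc (0:ℝ) 1, |derivWithin G (Icc 0 1) y| ≤ Bg) ∧
    (∀ a ∈ Icc (0:ℝ) 1, ∀ b ∈ Icc (0:ℝ) 1,
      |derivWithin G (Icc 0 1) a - derivWithin G (Icc 0 1) b| ≤ Bg * |a - b|) ∧
    ContinuousOn (derivWithin G (Icc 0 1)) (Icc 0 1) := by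
  have hU : UniqueDiffOn ℝ (Icc (0:ℝ) 1) := uniqueDiffOn_Icc zero_lt_one
  have hKc : ContDiffOn ℝ 1 (derivWithin G (Icc 0 1)) (Icc 0 1) :=
    hGsm.derivWithin hU (by norm_num)
  have heq : ∀ y ∈ Icc (0:ℝ) 1,
      iteratedDerivWithin 1 G (Icc 0 1) y = derivWithin G (Icc 0 1) y := fun y hy =>
    by rw [iteratedDerivWithin_one]
  refine ⟨?_, ?_, hKc.continuousOn⟩
  · intro y hy
    have := hGbd 1 (by norm_num) y hy
    rwa [heq y hy, Real.norm_eq_abs] at this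
  · have hbd2 : ∀ y ∈ Icc (0:ℝ) 1,
        ‖derivWithin (derivWithin G (Icc 0 1)) (Icc 0 1) y‖ ≤ Bg := by
      intro y hy
      have h2 := hGbd 2 le_rfl y hy
      have : iteratedDerivWithin 2 G (Icc 0 1) y
          = derivWithin (derivWithin G (Icc 0 1)) (Icc 0 1) y := by
        rw [show (2:ℕ) = 1 + 1 from rfl, iteratedDerivWithin_succ]
        exact derivWithin_congr heq (heq y hy)
      rwa [this] at h2
    intro a ha b hb
    have := Convex.norm_image_sub_le_of_norm_derivWithin_le
      (hKc.differentiableOn one_ne_zero) hbd2 (convex_Icc 0 1) hb ha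
    simpa [Real.norm_eq_abs] using this
end

set_option maxHeartbeats 1000000 in
theorem stmt14 (c m Bg : ℝ) (M : NNReal) (hc : 0 < c) (hm : 0 < m) (hBg : 0 < Bg)
    (η : ℝ → ℝ) (hηsm : ContDiffOn ℝ 1 η (Icc 0 1))
    (hηc : ∀ x ∈ Icc (0:ℝ) 1, c ≤ η x) (hη1 : (∫ y in (0:ℝ)..1, η y) = 1)
    -- G = (F^η)⁻¹, assumed to be C² with C²-norm bounded by Bg
    (G : ℝ → ℝ) (hG : ∀ x ∈ Icc (0:ℝ) 1, G (∫ y in (0:ℝ)..x, η y) = x)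
    (hGsm : ContDiffOn ℝ 2 G (Icc 0 1))
    (hGbd : ∀ i ≤ 2, ∀ y ∈ Icc (0:ℝ) 1, ‖iteratedDerivWithin i G (Icc 0 1) y‖ ≤ Bg) :
    ∃ C > 0, ∃ C' > 0, ∀ p p' : ℝ → ℝ,
      LipschitzOnWith M p (Icc 0 1) → LipschitzOnWith M p' (Icc 0 1) →
      (∀ x ∈ Icc (0:ℝ) 1, m ≤ p x) → (∀ x ∈ Icc (0:ℝ) 1, m ≤ p' x) →
      (∫ y in (0:ℝ)..1, p y) = 1 → (∫ y in (0:ℝ)..1, p' y) = 1 →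
      (∀ x ∈ Icc (0:ℝ) 1,
        |derivWithin G (Icc 0 1) (∫ y in (0:ℝ)..x, p y) * p x -
          derivWithin G (Icc 0 1) (∫ y in (0:ℝ)..x, p' y) * p' x| ≤
        C * (|(∫ y in (0:ℝ)..x, p y) - ∫ y in (0:ℝ)..x, p' y| + |p x - p' x|)) ∧
      Real.sqrt (∫ x in Icc (0:ℝ) 1,
          (derivWithin G (Icc 0 1) (∫ y in (0:ℝ)..x, p y) * p x -
            derivWithin G (Icc 0 1) (∫ y in (0:ℝ)..x, p' y) * p' x) ^ 2) ≤
        C' * Real.sqrt (∫ x in Icc (0:ℝ) 1, (p x - p' x) ^ 2) := by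
  obtain ⟨hK1, hKlip, hKcont⟩ := aux_K G Bg hBg hGsm hGbd
  set C := Bg * ((M:ℝ) + 2) with hC
  have hCpos : 0 < C := by positivity
  refine ⟨C, hCpos, 2 * C, by positivity, ?_⟩
  intro p p' hp hp' hpm hp'm hpi hp'i
  obtain ⟨hpub, hpF, hpFc⟩ := aux_density m M p hp hm hpm hpi
  obtain ⟨hp'ub, hp'F, hp'Fc⟩ := aux_density m M p' hp' hm hp'm hp'i
  have hpt : ∀ x ∈ Icc (0:ℝ) 1,
      |derivWithin G (Icc 0 1) (∫ y in (0:ℝ)..x, p y) * p x -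
        derivWithin G (Icc 0 1) (∫ y in (0:ℝ)..x, p' y) * p' x| ≤
      C * (|(∫ y in (0:ℝ)..x, p y) - ∫ y in (0:ℝ)..x, p' y| + |p x - p' x|) := by
    intro x hx
    set K := derivWithin G (Icc 0 1) with hKdef
    set a := ∫ y in (0:ℝ)..x, p y with ha
    set b := ∫ y in (0:ℝ)..x, p' y with hb
    have h1 : K a * p x - K b * p' x = (K a - K b) * p x + K b * (p x - p' x) := by ring
    have h2 : |K a - K b| ≤ Bg * |a - b| := hKlip a (hpF x hx) b (hp'F x hx)
    have h3 : |K b| ≤ Bg := hK1 b (hp'F x hx)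
    have h4 : |p x| ≤ 1 + (M:ℝ) :=
      abs_le.2 ⟨by nlinarith [hpm x hx, M.coe_nonneg], hpub x hx⟩
    calc |K a * p x - K b * p' x|
        = |(K a - K b) * p x + K b * (p x - p' x)| := by rw [h1]
      _ ≤ |(K a - K b) * p x| + |K b * (p x - p' x)| := abs_add_le _ _
      _ = |K a - K b| * |p x| + |K b| * |p x - p' x| := by rw [abs_mul, abs_mul]
      _ ≤ (Bg * |a - b|) * (1 + (M:ℝ)) + Bg * |p x - p' x| :=
          add_le_add (mul_le_mul h2 h4 (abs_nonneg _) (by positivity))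
            (mul_le_mul_of_nonneg_right h3 (abs_nonneg _))
      _ ≤ C * (|a - b| + |p x - p' x|) := by
          rw [hC]
          nlinarith [mul_nonneg hBg.le (abs_nonneg (a - b)), mul_nonneg (mul_nonneg hBg.le M.coe_nonneg) (abs_nonneg (p x - p' x)), mul_nonneg hBg.le (abs_nonneg (p x - p' x))]
  refine ⟨hpt, ?_⟩
  set K := derivWithin G (Icc 0 1) with hKdef
  set D := fun x => K (∫ y in (0:ℝ)..x, p y) * p x - K (∫ y in (0:ℝ)..x, p' y) * p' x with hD
  set g := fun x => p x - p' x with hg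
  set A := ∫ x in Icc (0:ℝ) 1, |g x| with hA
  have hgc : ContinuousOn g (Icc 0 1) := hp.continuousOn.sub hp'.continuousOn
  have hA0 : 0 ≤ A := integral_nonneg fun x => abs_nonneg _
  have hvol : (volume (Icc (0:ℝ) 1)).toReal = 1 := by simp [Real.volume_Icc]
  have hgint : IntegrableOn (fun x => |g x|) (Icc (0:ℝ) 1) := hgc.abs.integrableOn_Icc
  have hFbd : ∀ x ∈ Icc (0:ℝ) 1,
      |(∫ y in (0:ℝ)..x, p y) - ∫ y in (0:ℝ)..x, p' y| ≤ A := by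
    intro x hx
    have hip : IntervalIntegrable p volume 0 x :=
      (hp.continuousOn.mono (uIcc_subset_Icc ⟨le_rfl, zero_le_one⟩ hx)).intervalIntegrable
    have hip' : IntervalIntegrable p' volume 0 x :=
      (hp'.continuousOn.mono (uIcc_subset_Icc ⟨le_rfl, zero_le_one⟩ hx)).intervalIntegrable
    have heq : (∫ y in (0:ℝ)..x, p y) - ∫ y in (0:ℝ)..x, p' y = ∫ y in (0:ℝ)..x, g y :=
      (intervalIntegral.integral_sub hip hip').symm
    rw [heq]
    calc |∫ y in (0:ℝ)..x, g y| ≤ ∫ y in (0:ℝ)..x, |g y| :=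
          intervalIntegral.abs_integral_le_integral_abs hx.1
      _ ≤ ∫ y in (0:ℝ)..1, |g y| := by
          apply intervalIntegral.integral_mono_interval le_rfl hx.1 hx.2
          · filter_upwards [ae_restrict_mem measurableSet_Ioc] with u _
            exact abs_nonneg _
          · exact (hgc.abs.mono (by rw [uIcc_of_le zero_le_one])).intervalIntegrable
      _ = A := by
          rw [intervalIntegral.integral_of_le zero_le_one, hA, integral_Icc_eq_integral_Ioc]
  have hDc : ContinuousOn D (Icc 0 1) :=
    ((hKcont.comp hpFc fun x hx => hpF x hx).mul hp.continuousOn).sub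
      ((hKcont.comp hp'Fc fun x hx => hp'F x hx).mul hp'.continuousOn)
  have hptsq : ∀ x ∈ Icc (0:ℝ) 1, D x ^ 2 ≤ 2 * C ^ 2 * (A ^ 2 + g x ^ 2) := by
    intro x hx
    have h1 := hpt x hx
    have h2 : |D x| ≤ C * (A + |g x|) := by
      refine le_trans h1 ?_
      have := hFbd x hx
      nlinarith [abs_nonneg (g x), hCpos]
    have h3 : D x ^ 2 ≤ (C * (A + |g x|)) ^ 2 := by
      rw [← sq_abs (D x)]
      exact pow_le_pow_left₀ (abs_nonneg _) h2 2
    nlinarith [sq_abs (g x), sq_nonneg (A - |g x|), abs_nonneg (g x)]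
  have hint1 : IntegrableOn (fun x => D x ^ 2) (Icc (0:ℝ) 1) := (hDc.pow 2).integrableOn_Icc
  have hint2 : IntegrableOn (fun x => 2 * C ^ 2 * (A ^ 2 + g x ^ 2)) (Icc (0:ℝ) 1) :=
    ((continuousOn_const (c := 2 * C ^ 2)).mul ((continuousOn_const (c := A ^ 2)).add (hgc.pow 2))).integrableOn_Icc
  have hII : (∫ x in Icc (0:ℝ) 1, D x ^ 2) ≤ ∫ x in Icc (0:ℝ) 1, 2 * C ^ 2 * (A ^ 2 + g x ^ 2) :=
    setIntegral_mono_on hint1 hint2 measurableSet_Icc hptsq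
  have hrhs : (∫ x in Icc (0:ℝ) 1, 2 * C ^ 2 * (A ^ 2 + g x ^ 2))
      = 2 * C ^ 2 * (A ^ 2 + ∫ x in Icc (0:ℝ) 1, g x ^ 2) := by
    rw [MeasureTheory.integral_const_mul]
    congr 1
    have hg2 : IntegrableOn (fun x => g x ^ 2) (Icc (0:ℝ) 1) := (hgc.pow 2).integrableOn_Icc
    have hcst : IntegrableOn (fun _ : ℝ => A ^ 2) (Icc (0:ℝ) 1) :=
      integrableOn_const (by simp [Real.volume_Icc])
    rw [integral_add hcst hg2, setIntegral_const, measureReal_def, hvol]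
    simp
  have hCS : A ^ 2 ≤ ∫ x in Icc (0:ℝ) 1, g x ^ 2 := aux_cs g hgc
  have hfin : (∫ x in Icc (0:ℝ) 1, D x ^ 2) ≤ (2 * C) ^ 2 * ∫ x in Icc (0:ℝ) 1, g x ^ 2 := by
    rw [hrhs] at hII
    nlinarith [hII, hCS, sq_nonneg C]
  calc Real.sqrt (∫ x in Icc (0:ℝ) 1, D x ^ 2)
      ≤ Real.sqrt ((2 * C) ^ 2 * ∫ x in Icc (0:ℝ) 1, g x ^ 2) := Real.sqrt_le_sqrt hfin
    _ = 2 * C * Real.sqrt (∫ x in Icc (0:ℝ) 1, g x ^ 2) := by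
        rw [Real.sqrt_mul (sq_nonneg _), Real.sqrt_sq (by positivity)]
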